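/- Let λ ∈ ℝ and let k : [0,∞) → ℝ be integrable (k ∈ L¹([0,∞))). Suppose λ + ∫_0^∞ |k(ξ)| dξ < 0. Let x : [0,∞) → ℝ be a continuous, differentiable function satisfying ẋ(t) = λ x(t) + ∫_0^t k(t − s) x(s) ds for all t ≥ 0, with arbitrary initial value x(0) = x₀. Then lim_{t → ∞} x(t) = 0. -/

import Mathlib

open MeasureTheory intervalIntegral Filter Set Real

section Aux
variable {k : ℝ → ℝ}

lemma aux_kint (hk : IntegrableOn k (Ici (0:ℝ))) {a b : ℝ} (ha : 0 ≤ a) (hab : a ≤ b) :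
    IntervalIntegrable k volume a b := by
  rw [intervalIntegrable_iff]
  refine hk.mono_set ?_
  rw [Set.uIoc_of_le hab]
  exact fun y hy => le_of_lt (lt_of_le_of_lt ha hy.1)

lemma aux_tail_le (hk : IntegrableOn (fun ξ => |k ξ|) (Ioi (0:ℝ))) {a c : ℝ} (ha : 0 ≤ a) (hac : a ≤ c) :
    ∫ ξ in a..c, |k ξ| ≤ ∫ ξ in Set.Ioi a, |k ξ| := by
  rw [intervalIntegral.integral_of_le hac]
  refine setIntegral_mono_set (hk.mono_set (Set.Ioi_subset_Ioi ha)) ?_ ?_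
  · exact Filter.Eventually.of_forall fun ξ => abs_nonneg _
  · exact (Set.Ioc_subset_Ioi_self).eventuallyLE

lemma aux_tail_mono (hk : IntegrableOn (fun ξ => |k ξ|) (Ioi (0:ℝ))) {a : ℝ} (ha : 0 ≤ a) :
    ∫ ξ in Set.Ioi a, |k ξ| ≤ ∫ ξ in Set.Ioi (0:ℝ), |k ξ| := by
  refine setIntegral_mono_set hk ?_ ?_
  · exact Filter.Eventually.of_forall fun ξ => abs_nonneg _
  · exact (Set.Ioi_subset_Ioi ha).eventuallyLE

lemma aux_tail_tendsto (hk : IntegrableOn (fun ξ => |k ξ|) (Ioi (0:ℝ))) :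
    Tendsto (fun a => ∫ ξ in Set.Ioi a, |k ξ|) atTop (nhds 0) := by
  have h1 : Tendsto (fun a : ℝ => ∫ ξ in (0:ℝ)..a, |k ξ|) atTop
      (nhds (∫ ξ in Set.Ioi (0:ℝ), |k ξ|)) :=
    MeasureTheory.intervalIntegral_tendsto_integral_Ioi 0 hk tendsto_id
  have h2 : Tendsto (fun a : ℝ => (∫ ξ in Set.Ioi (0:ℝ), |k ξ|) - ∫ ξ in (0:ℝ)..a, |k ξ|)
      atTop (nhds 0) := by
    have := (tendsto_const_nhds (x := ∫ ξ in Set.Ioi (0:ℝ), |k ξ|) (f := atTop)).sub h1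
    simpa using this
  refine h2.congr' ?_
  filter_upwards [eventually_ge_atTop (0:ℝ)] with a ha
  have hsplit : ∫ ξ in Set.Ioi (0:ℝ), |k ξ| =
      (∫ ξ in Set.Ioc 0 a, |k ξ|) + ∫ ξ in Set.Ioi a, |k ξ| := by
    rw [← MeasureTheory.setIntegral_union (Set.Ioc_disjoint_Ioi le_rfl) measurableSet_Ioi
      (hk.mono_set Set.Ioc_subset_Ioi_self) (hk.mono_set (Set.Ioi_subset_Ioi ha)),
      Set.Ioc_union_Ioi_eq_Ioi ha]
  rw [intervalIntegral.integral_of_le ha]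
  linarith [hsplit]

lemma aux_expint {lam : ℝ} (hlam : lam < 0) {a t D : ℝ} (hat : a ≤ t) (hD : 0 ≤ D) :
    exp (lam*t) * ∫ u in a..t, exp (-(lam*u)) * D ≤ D * (-lam)⁻¹ := by
  have hanti : ∀ u : ℝ, HasDerivAt (fun v => exp (-(lam*v)) * (-lam)⁻¹) (exp (-(lam*u))) u := by
    intro u
    have h1 : HasDerivAt (fun v : ℝ => -(lam*v)) (-lam) u := by
      simpa using ((hasDerivAt_id u).const_mul lam).fun_neg
    have h3 := h1.exp.mul_const (-lam)⁻¹
    have hne : lam ≠ 0 := ne_of_lt hlam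
    refine h3.congr_deriv ?_
    field_simp
  have hcont : Continuous fun u : ℝ => exp (-(lam*u)) :=
    Real.continuous_exp.comp ((continuous_const.mul continuous_id).neg)
  have hInt : ∫ u in a..t, exp (-(lam*u))
      = exp (-(lam*t)) * (-lam)⁻¹ - exp (-(lam*a)) * (-lam)⁻¹ := by
    have := integral_eq_sub_of_hasDerivAt (f := fun v => exp (-(lam*v)) * (-lam)⁻¹)
      (fun u _ => hanti u) (hcont.intervalIntegrable a t)
    simpa using this
  rw [intervalIntegral.integral_mul_const, hInt]
  have e1 : exp (lam*t) * exp (-(lam*t)) = 1 := by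
    rw [← Real.exp_add]; simp
  have e2 : 0 < exp (lam*t) * exp (-(lam*a)) := mul_pos (exp_pos _) (exp_pos _)
  have hinv : 0 < (-lam)⁻¹ := inv_pos.2 (by linarith)
  nlinarith [mul_nonneg (le_of_lt e2) (mul_nonneg hinv.le hD)]

/-- Sufficient condition for absolute stability of the exact solution
(Proposition 5.1): if λ + ∫₀^∞ |k| < 0 then the solution of the test problem with
memory tends to zero. -/
theorem stmt_6 (lam : ℝ) (k : ℝ → ℝ)
    (hk : MeasureTheory.IntegrableOn k (Set.Ici (0 : ℝ)))
    (hneg : lam + (∫ ξ in Set.Ioi (0 : ℝ), |k ξ|) < 0)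
    (x : ℝ → ℝ) (x₀ : ℝ) (hx0 : x 0 = x₀)
    (hcont : ContinuousOn x (Set.Ici (0 : ℝ)))
    (hode : ∀ t : ℝ, 0 ≤ t →
      HasDerivAt x (lam * x t + ∫ s in (0 : ℝ)..t, k (t - s) * x s) t) :
    Filter.Tendsto x Filter.atTop (nhds 0) := by
  have hkabs : IntegrableOn (fun ξ => |k ξ|) (Ioi (0:ℝ)) :=
    (hk.mono_set Set.Ioi_subset_Ici_self).abs
  set b := ∫ ξ in Set.Ioi (0:ℝ), |k ξ| with hbdef
  have hb0 : 0 ≤ b := setIntegral_nonneg measurableSet_Ioi fun ξ _ => abs_nonneg _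
  have hlam : lam < 0 := by linarith
  have hcexp : Continuous fun u : ℝ => exp (-(lam*u)) :=
    Real.continuous_exp.comp ((continuous_const.mul continuous_id).neg)
  have hnl : (0:ℝ) < -lam := by linarith
  have hinv : (0:ℝ) < (-lam)⁻¹ := inv_pos.2 hnl
  set F : ℝ → ℝ := fun t => ∫ s in (0:ℝ)..t, k (t - s) * x s with hFdef
  -- interval integrability of the convolution integrand
  have hFint : ∀ t, 0 ≤ t → IntervalIntegrable (fun s => k (t - s) * x s) volume 0 t := by
    intro t ht
    have h1 : IntervalIntegrable (fun s => k (t - s)) volume 0 t := by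
      have := ((aux_kint hk le_rfl ht).comp_sub_left t).symm
      simpa using this
    exact h1.mul_continuousOn (hcont.mono (by
      rw [Set.uIcc_of_le ht]; exact fun y hy => hy.1))
  -- splitting bound for the memory term
  have hFsplit : ∀ T u C₁ C₂, 0 ≤ T → T ≤ u → 0 ≤ C₁ → 0 ≤ C₂ →
      (∀ s ∈ Set.Icc (0:ℝ) T, |x s| ≤ C₁) → (∀ s ∈ Set.Icc T u, |x s| ≤ C₂) →
      |F u| ≤ C₁ * (∫ ξ in (u-T)..u, |k ξ|) + C₂ * (∫ ξ in (0:ℝ)..(u-T), |k ξ|) := by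
    intro T u C₁ C₂ hT hTu hC₁ hC₂ hbd1 hbd2
    have hu : 0 ≤ u := hT.trans hTu
    have hint := hFint u hu
    have h1 : IntervalIntegrable (fun s => k (u - s) * x s) volume 0 T :=
      hint.mono_set (by
        rw [Set.uIcc_of_le hT, Set.uIcc_of_le hu]; exact Set.Icc_subset_Icc le_rfl hTu)
    have h2 : IntervalIntegrable (fun s => k (u - s) * x s) volume T u :=
      hint.mono_set (by
        rw [Set.uIcc_of_le hTu, Set.uIcc_of_le hu]; exact Set.Icc_subset_Icc hT le_rfl)
    have hsplit : F u = (∫ s in (0:ℝ)..T, k (u - s) * x s) + ∫ s in T..u, k (u - s) * x s := by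
      simp only [hFdef]
      exact (intervalIntegral.integral_add_adjacent_intervals h1 h2).symm
    have hka : IntervalIntegrable (fun s => |k (u - s)|) volume 0 u := by
      have := ((aux_kint hk le_rfl hu).abs.comp_sub_left u).symm
      simpa using this
    have hka1 : IntervalIntegrable (fun s => |k (u - s)| * C₁) volume 0 T :=
      (hka.mono_set (by
        rw [Set.uIcc_of_le hT, Set.uIcc_of_le hu]
        exact Set.Icc_subset_Icc le_rfl hTu)).mul_const C₁
    have hka2 : IntervalIntegrable (fun s => |k (u - s)| * C₂) volume T u :=
      (hka.mono_set (by
        rw [Set.uIcc_of_le hTu, Set.uIcc_of_le hu]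
        exact Set.Icc_subset_Icc hT le_rfl)).mul_const C₂
    have e1 : |∫ s in (0:ℝ)..T, k (u - s) * x s| ≤ C₁ * ∫ ξ in (u-T)..u, |k ξ| := by
      calc |∫ s in (0:ℝ)..T, k (u - s) * x s| ≤ ∫ s in (0:ℝ)..T, |k (u - s) * x s| :=
            intervalIntegral.abs_integral_le_integral_abs hT
        _ ≤ ∫ s in (0:ℝ)..T, |k (u - s)| * C₁ := by
            refine intervalIntegral.integral_mono_on hT h1.abs hka1 fun s hs => ?_
            rw [abs_mul]
            exact mul_le_mul_of_nonneg_left (hbd1 s hs) (abs_nonneg _)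
        _ = (∫ s in (0:ℝ)..T, |k (u - s)|) * C₁ := intervalIntegral.integral_mul_const _ _
        _ = (∫ ξ in (u-T)..u, |k ξ|) * C₁ := by
            rw [intervalIntegral.integral_comp_sub_left (fun ξ => |k ξ|) u]
            norm_num
        _ = C₁ * ∫ ξ in (u-T)..u, |k ξ| := mul_comm _ _
    have e2 : |∫ s in T..u, k (u - s) * x s| ≤ C₂ * ∫ ξ in (0:ℝ)..(u-T), |k ξ| := by
      calc |∫ s in T..u, k (u - s) * x s| ≤ ∫ s in T..u, |k (u - s) * x s| :=
            intervalIntegral.abs_integral_le_integral_abs hTu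
        _ ≤ ∫ s in T..u, |k (u - s)| * C₂ := by
            refine intervalIntegral.integral_mono_on hTu h2.abs hka2 fun s hs => ?_
            rw [abs_mul]
            exact mul_le_mul_of_nonneg_left (hbd2 s hs) (abs_nonneg _)
        _ = (∫ s in T..u, |k (u - s)|) * C₂ := intervalIntegral.integral_mul_const _ _
        _ = (∫ ξ in (0:ℝ)..(u-T), |k ξ|) * C₂ := by
            rw [intervalIntegral.integral_comp_sub_left (fun ξ => |k ξ|) u]
            norm_num
        _ = C₂ * ∫ ξ in (0:ℝ)..(u-T), |k ξ| := mul_comm _ _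
    calc |F u| ≤ |∫ s in (0:ℝ)..T, k (u - s) * x s| + |∫ s in T..u, k (u - s) * x s| := by
          rw [hsplit]; exact abs_add_le _ _
      _ ≤ _ := add_le_add e1 e2
  -- crude bound on F via a sup bound
  have hFb : ∀ u m, 0 ≤ u → (∀ s ∈ Set.Icc (0:ℝ) u, |x s| ≤ m) → |F u| ≤ m * b := by
    intro u m hu hmb
    have hm0 : 0 ≤ m := (abs_nonneg _).trans (hmb 0 (Set.left_mem_Icc.2 hu))
    have h := hFsplit 0 u m m le_rfl hu hm0 hm0
      (fun s hs => hmb s ⟨hs.1, hs.2.trans hu⟩) hmb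
    simp only [sub_zero, intervalIntegral.integral_same, mul_zero, zero_add] at h
    have htail : ∫ ξ in (0:ℝ)..u, |k ξ| ≤ b := by
      have := aux_tail_le hkabs le_rfl hu
      rw [← hbdef] at this; exact this
    nlinarith [h, mul_le_mul_of_nonneg_left htail hm0]
  -- derivative of the integrating-factor function
  have hg : ∀ u, 0 ≤ u →
      HasDerivAt (fun v => exp (-(lam*v)) * x v) (exp (-(lam*u)) * F u) u := by
    intro u hu
    have h1 : HasDerivAt (fun v : ℝ => -(lam*v)) (-lam) u := by
      simpa using ((hasDerivAt_id u).const_mul lam).fun_neg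
    have h2 := h1.exp.mul (hode u hu)
    refine h2.congr_deriv ?_
    simp only [hFdef]
    ring
  -- max of |x| on [0, t]
  have hmax : ∀ t, 0 ≤ t → ∃ m, 0 ≤ m ∧ (∀ s ∈ Set.Icc (0:ℝ) t, |x s| ≤ m) := by
    intro t ht
    obtain ⟨s₀, hs₀, hmax⟩ := isCompact_Icc.exists_isMaxOn (Set.nonempty_Icc.2 ht)
      (show ContinuousOn (fun s => |x s|) (Set.Icc 0 t) from
        continuous_abs.comp_continuousOn (hcont.mono fun y hy => hy.1))
    exact ⟨|x s₀|, abs_nonneg _, fun s hs => hmax hs⟩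
  -- integrability of the derivative
  have hgint : ∀ t, 0 ≤ t → IntervalIntegrable (fun u => exp (-(lam*u)) * F u) volume 0 t := by
    intro t ht
    obtain ⟨m, hm0, hm⟩ := hmax t ht
    rw [intervalIntegrable_iff, Set.uIoc_of_le ht]
    have hxm : AEStronglyMeasurable x (volume.restrict (Set.Ioc (0:ℝ) t)) :=
      (hcont.mono fun y hy => le_of_lt hy.1).aestronglyMeasurable measurableSet_Ioc
    have hdm : AEStronglyMeasurable (deriv x) (volume.restrict (Set.Ioc (0:ℝ) t)) :=
      (measurable_deriv x).aestronglyMeasurable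
    have hexpm : AEStronglyMeasurable (fun u : ℝ => exp (-(lam*u)))
        (volume.restrict (Set.Ioc (0:ℝ) t)) := by
      exact hcexp.aestronglyMeasurable
    have hcand : AEStronglyMeasurable (fun u => exp (-(lam*u)) * (deriv x u - lam * x u))
        (volume.restrict (Set.Ioc (0:ℝ) t)) :=
      hexpm.mul (hdm.sub (hxm.const_mul lam))
    have hmeas : AEStronglyMeasurable (fun u => exp (-(lam*u)) * F u)
        (volume.restrict (Set.Ioc (0:ℝ) t)) := by
      refine hcand.congr ((MeasureTheory.ae_restrict_iff'
        (p := fun u => exp (-(lam*u)) * (deriv x u - lam * x u) = exp (-(lam*u)) * F u)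
        measurableSet_Ioc).2 (Filter.Eventually.of_forall fun u hu => ?_))
      have hd := (hode u hu.1.le).deriv
      rw [hd]
      simp only [hFdef]
      ring
    refine Integrable.mono' (g := fun _ => exp (-(lam*t)) * (m * b))
      (integrableOn_const measure_Ioc_lt_top.ne enorm_ne_top) hmeas ?_
    rw [MeasureTheory.ae_restrict_iff' measurableSet_Ioc]
    refine Filter.Eventually.of_forall fun u hu => ?_
    have h1 : |F u| ≤ m * b := hFb u m hu.1.le (fun s hs => hm s ⟨hs.1, hs.2.trans hu.2⟩)
    have h2 : exp (-(lam*u)) ≤ exp (-(lam*t)) := by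
      apply Real.exp_le_exp.2
      nlinarith [hu.2]
    rw [Real.norm_eq_abs, abs_mul, abs_of_pos (Real.exp_pos _)]
    exact mul_le_mul h2 h1 (abs_nonneg _) (Real.exp_pos _).le
  have hIabs : ∀ t, 0 ≤ t →
      IntervalIntegrable (fun u => |exp (-(lam*u)) * F u|) volume 0 t :=
    fun t ht => (hgint t ht).abs
  -- Duhamel formula
  have hDuh : ∀ t, 0 ≤ t →
      exp (-(lam*t)) * x t = x₀ + ∫ u in (0:ℝ)..t, exp (-(lam*u)) * F u := by
    intro t ht
    have hftc := intervalIntegral.integral_eq_sub_of_hasDerivAt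
      (f := fun v => exp (-(lam*v)) * x v)
      (fun u hu => hg u (by rw [Set.uIcc_of_le ht] at hu; exact hu.1)) (hgint t ht)
    simp only [mul_zero, neg_zero, Real.exp_zero, one_mul, hx0] at hftc
    linarith [hftc]
  have habs : ∀ t, 0 ≤ t →
      |x t| ≤ exp (lam*t) * (|x₀| + ∫ u in (0:ℝ)..t, |exp (-(lam*u)) * F u|) := by
    intro t ht
    have hd := hDuh t ht
    have e1 : exp (lam*t) * exp (-(lam*t)) = 1 := by
      rw [← Real.exp_add]; simp
    have hx : x t = exp (lam*t) * (x₀ + ∫ u in (0:ℝ)..t, exp (-(lam*u)) * F u) := by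
      calc x t = exp (lam*t) * exp (-(lam*t)) * x t := by rw [e1]; ring
        _ = _ := by rw [mul_assoc, hd]
    rw [hx, abs_mul, abs_of_pos (Real.exp_pos _)]
    refine mul_le_mul_of_nonneg_left ?_ (Real.exp_pos _).le
    calc |x₀ + ∫ u in (0:ℝ)..t, exp (-(lam*u)) * F u|
        ≤ |x₀| + |∫ u in (0:ℝ)..t, exp (-(lam*u)) * F u| := abs_add_le _ _
      _ ≤ _ := by
          have := intervalIntegral.abs_integral_le_integral_abs
            (f := fun u => exp (-(lam*u)) * F u) (μ := volume) ht
          linarith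
  -- global bound
  set C := |x₀| * (-lam) / ((-lam) - b) with hCdef
  have hden : 0 < (-lam) - b := by linarith
  have hC0 : 0 ≤ C := div_nonneg (mul_nonneg (abs_nonneg _) hnl.le) hden.le
  have hglob : ∀ t, 0 ≤ t → |x t| ≤ C := by
    intro t ht
    obtain ⟨s₀, hs₀mem, hs₀max⟩ := isCompact_Icc.exists_isMaxOn (Set.nonempty_Icc.2 ht)
      (show ContinuousOn (fun s => |x s|) (Set.Icc 0 t) from
        continuous_abs.comp_continuousOn (hcont.mono fun y hy => hy.1))
    have hm : ∀ s ∈ Set.Icc (0:ℝ) t, |x s| ≤ |x s₀| := fun s hs => hs₀max hs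
    have hm0 : 0 ≤ |x s₀| := abs_nonneg _
    have hs₀0 : 0 ≤ s₀ := hs₀mem.1
    have h1 := habs s₀ hs₀0
    have hcontD : Continuous fun u : ℝ => exp (-(lam*u)) * (|x s₀| * b) :=
      hcexp.mul continuous_const
    have h2 : (∫ u in (0:ℝ)..s₀, |exp (-(lam*u)) * F u|)
        ≤ ∫ u in (0:ℝ)..s₀, exp (-(lam*u)) * (|x s₀| * b) := by
      refine intervalIntegral.integral_mono_on hs₀0 (hIabs s₀ hs₀0)
        (hcontD.intervalIntegrable _ _) fun u hu => ?_
      rw [abs_mul, abs_of_pos (Real.exp_pos _)]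
      exact mul_le_mul_of_nonneg_left
        (hFb u (|x s₀|) hu.1 (fun s hs => hm s ⟨hs.1, hs.2.trans (hu.2.trans hs₀mem.2)⟩))
        (Real.exp_pos _).le
    have h3 := aux_expint hlam hs₀0 (mul_nonneg hm0 hb0)
    have hexple : exp (lam * s₀) ≤ 1 := Real.exp_le_one_iff.2 (by nlinarith)
    have expos : (0:ℝ) < exp (lam*s₀) := Real.exp_pos _
    have key : |x s₀| ≤ |x₀| + |x s₀| * b * (-lam)⁻¹ := by
      have hA := mul_le_mul_of_nonneg_left h2 expos.le
      have hB : exp (lam*s₀) * |x₀| ≤ |x₀| := by nlinarith [abs_nonneg x₀]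
      nlinarith [h1, hA, h3]
    have hfin : |x s₀| ≤ C := by
      rw [hCdef, le_div_iff₀ hden]
      have h4 : |x s₀| * b * (-lam)⁻¹ * (-lam) = |x s₀| * b := by
        rw [mul_assoc, inv_mul_cancel₀ (ne_of_gt hnl), mul_one]
      nlinarith [mul_le_mul_of_nonneg_right key hnl.le]
    exact (hm t (Set.right_mem_Icc.2 ht)).trans hfin
  -- limsup machinery
  have hub : Filter.IsBoundedUnder (· ≤ ·) atTop (fun t => |x t|) := by
    refine Filter.isBoundedUnder_of_eventually_le (a := C) ?_
    filter_upwards [eventually_ge_atTop (0:ℝ)] with t ht using hglob t ht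
  have hlb : Filter.IsBoundedUnder (· ≥ ·) atTop (fun t => |x t|) :=
    Filter.isBoundedUnder_of ⟨0, fun t => abs_nonneg _⟩
  set L := Filter.limsup (fun t => |x t|) atTop with hLdef
  have hL0 : 0 ≤ L :=
    Filter.le_limsup_of_frequently_le (Filter.Frequently.of_forall fun t => abs_nonneg _) hub
  -- main epsilon estimate
  have hmain : ∀ ε : ℝ, 0 < ε → L * (-lam) ≤ C * ε + (L + ε) * b := by
    intro ε hε
    have hev : ∀ᶠ t in atTop, |x t| < L + ε :=
      Filter.eventually_lt_of_limsup_lt (by linarith) hub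
    obtain ⟨T₀, hT₀⟩ := Filter.eventually_atTop.1 hev
    set T := max T₀ 0 with hTdef
    have hT0 : (0:ℝ) ≤ T := le_max_right _ _
    have hT : ∀ s, T ≤ s → |x s| ≤ L + ε :=
      fun s hs => (hT₀ s ((le_max_left _ _).trans hs)).le
    have hevR : ∀ᶠ a in atTop, (∫ ξ in Set.Ioi a, |k ξ|) < ε :=
      (aux_tail_tendsto hkabs).eventually (gt_mem_nhds hε)
    obtain ⟨R₀, hR₀⟩ := Filter.eventually_atTop.1 hevR
    set R := max R₀ 0 with hRdef
    have hR0 : (0:ℝ) ≤ R := le_max_right _ _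
    have hR : ∀ a, R ≤ a → (∫ ξ in Set.Ioi a, |k ξ|) ≤ ε :=
      fun a ha => (hR₀ a ((le_max_left _ _).trans ha)).le
    set T' := T + R with hT'def
    have hT'0 : 0 ≤ T' := add_nonneg hT0 hR0
    have hLε : 0 ≤ L + ε := by linarith
    set D₀ := C * ε + (L + ε) * b with hD₀def
    have hD₀0 : 0 ≤ D₀ := add_nonneg (mul_nonneg hC0 hε.le) (mul_nonneg hLε hb0)
    have hFtail : ∀ u, T' ≤ u → |F u| ≤ D₀ := by
      intro u hu
      have hTu : T ≤ u := by
        have : T + R ≤ u := hu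
        linarith
      have h := hFsplit T u C (L + ε) hT0 hTu hC0 hLε
        (fun s hs => hglob s hs.1) (fun s hs => hT s hs.1)
      have h1 : (0:ℝ) ≤ u - T := by linarith
      have t1 : (∫ ξ in (u-T)..u, |k ξ|) ≤ ε := by
        have h2 := aux_tail_le hkabs h1 (by linarith : u - T ≤ u)
        have h3 := hR (u - T) (by have : T + R ≤ u := hu; linarith)
        linarith
      have t2 : (∫ ξ in (0:ℝ)..(u-T), |k ξ|) ≤ b := by
        have := aux_tail_le hkabs le_rfl h1
        rw [← hbdef] at this; exact this
      have p1 := mul_le_mul_of_nonneg_left t1 hC0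
      have p2 := mul_le_mul_of_nonneg_left t2 hLε
      rw [hD₀def]
      linarith
    set K₀ := ∫ u in (0:ℝ)..T', |exp (-(lam*u)) * F u| with hK₀def
    have hevx : ∀ᶠ t in atTop, |x t| ≤ exp (lam*t) * (|x₀| + K₀) + D₀ * (-lam)⁻¹ := by
      filter_upwards [eventually_ge_atTop T'] with t ht
      have ht0 : 0 ≤ t := hT'0.trans ht
      have h1 := habs t ht0
      have hi1 : IntervalIntegrable (fun u => |exp (-(lam*u)) * F u|) volume 0 T' :=
        hIabs T' hT'0
      have hi2 : IntervalIntegrable (fun u => |exp (-(lam*u)) * F u|) volume T' t :=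
        (hIabs t ht0).mono_set (by
          rw [Set.uIcc_of_le ht, Set.uIcc_of_le ht0]
          exact Set.Icc_subset_Icc hT'0 le_rfl)
      have hsplit : (∫ u in (0:ℝ)..t, |exp (-(lam*u)) * F u|)
          = K₀ + ∫ u in T'..t, |exp (-(lam*u)) * F u| := by
        rw [hK₀def]
        exact (intervalIntegral.integral_add_adjacent_intervals hi1 hi2).symm
      have hcontD : Continuous fun u : ℝ => exp (-(lam*u)) * D₀ :=
        hcexp.mul continuous_const
      have h2 : (∫ u in T'..t, |exp (-(lam*u)) * F u|)
          ≤ ∫ u in T'..t, exp (-(lam*u)) * D₀ := by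
        refine intervalIntegral.integral_mono_on ht hi2
          (hcontD.intervalIntegrable _ _) fun u hu => ?_
        rw [abs_mul, abs_of_pos (Real.exp_pos _)]
        exact mul_le_mul_of_nonneg_left (hFtail u hu.1) (Real.exp_pos _).le
      have h3 := aux_expint hlam ht hD₀0
      have expos : (0:ℝ) < exp (lam*t) := Real.exp_pos _
      rw [hsplit] at h1
      nlinarith [mul_le_mul_of_nonneg_left h2 expos.le]
    have he0 : Filter.Tendsto (fun t : ℝ => exp (lam*t)) atTop (nhds 0) := by
      apply Real.tendsto_exp_atBot.comp
      exact Filter.Tendsto.const_mul_atTop_of_neg hlam tendsto_id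
    have htend : Filter.Tendsto (fun t => exp (lam*t) * (|x₀| + K₀) + D₀ * (-lam)⁻¹) atTop
        (nhds (0 * (|x₀| + K₀) + D₀ * (-lam)⁻¹)) :=
      (he0.mul_const _).add tendsto_const_nhds
    have hlim : L ≤ D₀ * (-lam)⁻¹ := by
      have hle := Filter.limsup_le_limsup (Filter.Eventually.mono hevx fun t h => h)
        (hlb.isCoboundedUnder_le) (htend.isBoundedUnder_le)
      rw [htend.limsup_eq] at hle
      rw [hLdef]
      calc Filter.limsup (fun t => |x t|) atTop ≤ 0 * (|x₀| + K₀) + D₀ * (-lam)⁻¹ := hle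
        _ = D₀ * (-lam)⁻¹ := by ring
    calc L * (-lam) ≤ (D₀ * (-lam)⁻¹) * (-lam) := mul_le_mul_of_nonneg_right hlim hnl.le
      _ = D₀ := by rw [mul_assoc, inv_mul_cancel₀ (ne_of_gt hnl), mul_one]
  -- conclude L ≤ 0
  have hL_le : L ≤ 0 := by
    have hstep : L * ((-lam) - b) ≤ 0 := by
      refine le_of_forall_pos_le_add fun η hη => ?_
      have hpos : (0:ℝ) < C + b + 1 := by linarith
      have hε : 0 < η / (C + b + 1) := by positivity
      have hmm := hmain _ hε
      have hεval : (η / (C + b + 1)) * (C + b + 1) = η := div_mul_cancel₀ _ (by linarith)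
      nlinarith [hε.le]
    nlinarith [hL0]
  have hliminf : (0:ℝ) ≤ Filter.liminf (fun t => |x t|) atTop :=
    Filter.le_liminf_of_le (hub.isCoboundedUnder_ge)
      (Filter.Eventually.of_forall fun t => abs_nonneg _)
  have habs0 : Filter.Tendsto (fun t => |x t|) atTop (nhds 0) :=
    tendsto_of_le_liminf_of_limsup_le hliminf hL_le hub hlb
  exact tendsto_zero_iff_abs_tendsto_zero x |>.mpr habs0
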